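/- arXiv:0902.1178 — 5 statements merged into one kernel-verified Lean document; each statement's English description precedes it below -/
import Mathlib

section
/- Let G be a group with elements σ_1, …, σ_{n-1} satisfying the braid relations, and let σ = σ_1 σ_2 ⋯ σ_{n-1}. Then σ^n = (σ σ_1)^{n-1}. -/
/-- The ordered product `σ = σ_1 σ_2 ⋯ σ_{n-1}` of the braid generators. -/
def braidProd {G : Type*} [Group G] (s : ℕ → G) (n : ℕ) : G :=
  ((List.range (n - 1)).map fun k => s (k + 1)).prod

/-- The Garside fundamental element `Δ = Π_{n-1} Π_{n-2} ⋯ Π_1`, where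
`Π_t = σ_1 σ_2 ⋯ σ_t`. -/
def garside {G : Type*} [Group G] (s : ℕ → G) (n : ℕ) : G :=
  ((List.range (n - 1)).map fun k =>
    ((List.range (n - 1 - k)).map fun j => s (j + 1)).prod).prod

/-- Partial product `Π_m = s 1 * s 2 * ⋯ * s m`. -/
def braidPi {G : Type*} [Group G] (s : ℕ → G) : ℕ → G
  | 0 => 1
  | m + 1 => braidPi s m * s (m + 1)

lemma braidPi_eq_listProd {G : Type*} [Group G] (s : ℕ → G) (m : ℕ) :
    ((List.range m).map fun k => s (k + 1)).prod = braidPi s m := by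
  induction m with
  | zero => simp [braidPi]
  | succ m ih => simp [List.range_succ, braidPi, ih]

/-- if σ_1, …, σ_{n-1} satisfy the braid relations and σ = σ_1⋯σ_{n-1},
then σ^n = (σ σ_1)^{n-1}. -/
theorem braid_sigma_pow_n {G : Type*} [Group G] (n : ℕ) (hn : 2 ≤ n) (s : ℕ → G)
    (hcomm : ∀ i j, 1 ≤ i → i + 1 < j → j ≤ n - 1 → s i * s j = s j * s i)
    (hbraid : ∀ i, 1 ≤ i → i + 1 ≤ n - 1 →
      s i * s (i + 1) * s i = s (i + 1) * s i * s (i + 1)) :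
    braidProd s n ^ n = (braidProd s n * s 1) ^ (n - 1) := by
  -- commuting a far generator past a partial product
  have S : ∀ m j, m + 1 < j → j ≤ n - 1 → braidPi s m * s j = s j * braidPi s m := by
    intro m
    induction m with
    | zero => intro j _ _; simp [braidPi]
    | succ m ih =>
      intro j h1 h2
      have e1 : s (m + 1) * s j = s j * s (m + 1) := hcomm (m + 1) j (by omega) (by omega) h2
      calc braidPi s (m + 1) * s j = braidPi s m * (s (m + 1) * s j) := by
            simp [braidPi, mul_assoc]
        _ = braidPi s m * s j * s (m + 1) := by rw [e1, mul_assoc]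
        _ = s j * braidPi s (m + 1) := by rw [ih j (by omega) h2]; simp [braidPi, mul_assoc]
  -- the shift relation for partial products
  have A' : ∀ m i, 1 ≤ i → i + 1 ≤ m → m ≤ n - 1 →
      braidPi s m * s i = s (i + 1) * braidPi s m := by
    intro m
    induction m with
    | zero => intro i _ h; omega
    | succ m ih =>
      intro i hi h1 h2
      rcases Nat.lt_or_ge (i + 1) (m + 1) with h | h
      · -- i + 1 ≤ m
        have e1 : s i * s (m + 1) = s (m + 1) * s i := hcomm i (m + 1) hi (by omega) h2
        calc braidPi s (m + 1) * s i = braidPi s m * (s (m + 1) * s i) := by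
              simp [braidPi, mul_assoc]
          _ = braidPi s m * s i * s (m + 1) := by rw [← e1, mul_assoc]
          _ = s (i + 1) * braidPi s (m + 1) := by
              rw [ih i hi (by omega) (by omega)]; simp [braidPi, mul_assoc]
      · -- i = m
        have him : i = m := by omega
        subst him
        obtain ⟨t, rfl⟩ : ∃ t, i = t + 1 := ⟨i - 1, by omega⟩
        have hb : s (t + 1) * s (t + 2) * s (t + 1) = s (t + 2) * s (t + 1) * s (t + 2) :=
          hbraid (t + 1) (by omega) (by omega)
        have hS : braidPi s t * s (t + 2) = s (t + 2) * braidPi s t := S t (t + 2) (by omega) (by omega)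
        show braidPi s t * s (t + 1) * s (t + 2) * s (t + 1) = s (t + 2) * (braidPi s t * s (t + 1) * s (t + 2))
        calc braidPi s t * s (t + 1) * s (t + 2) * s (t + 1)
            = braidPi s t * (s (t + 1) * s (t + 2) * s (t + 1)) := by
              simp [mul_assoc]
          _ = braidPi s t * (s (t + 2) * (s (t + 1) * s (t + 2))) := by rw [hb]; simp [mul_assoc]
          _ = braidPi s t * s (t + 2) * (s (t + 1) * s (t + 2)) := by simp [mul_assoc]
          _ = s (t + 2) * (braidPi s t * s (t + 1) * s (t + 2)) := by rw [hS]; simp [mul_assoc]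
  set σ := braidPi s (n - 1) with hσ
  have hbp : braidProd s n = σ := braidPi_eq_listProd s (n - 1)
  have A : ∀ i, 1 ≤ i → i + 1 ≤ n - 1 → σ * s i = s (i + 1) * σ :=
    fun i h1 h2 => A' (n - 1) i h1 h2 le_rfl
  have C : ∀ k, k + 1 ≤ n - 1 → σ ^ k * s 1 = s (k + 1) * σ ^ k := by
    intro k
    induction k with
    | zero => intro _; simp
    | succ k ih =>
      intro hk
      calc σ ^ (k + 1) * s 1 = σ * (σ ^ k * s 1) := by rw [pow_succ']; rw [mul_assoc]
        _ = σ * s (k + 1) * σ ^ k := by rw [ih (by omega)]; rw [mul_assoc]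
        _ = s (k + 2) * σ * σ ^ k := by rw [A (k + 1) (by omega) hk]
        _ = s (k + 1 + 1) * σ ^ (k + 1) := by rw [mul_assoc, ← pow_succ']
  have B : ∀ k, k ≤ n - 2 → (σ * s 1) ^ k = (s 1)⁻¹ * braidPi s (k + 1) * σ ^ k := by
    intro k
    induction k with
    | zero => intro _; simp [braidPi]
    | succ k ih =>
      intro hk
      have hC : σ ^ (k + 1) * s 1 = s (k + 2) * σ ^ (k + 1) := C (k + 1) (by omega)
      calc (σ * s 1) ^ (k + 1) = (σ * s 1) ^ k * (σ * s 1) := pow_succ _ _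
        _ = (s 1)⁻¹ * braidPi s (k + 1) * σ ^ k * (σ * s 1) := by rw [ih (by omega)]
        _ = (s 1)⁻¹ * braidPi s (k + 1) * (σ ^ (k + 1) * s 1) := by
            rw [mul_assoc]; rw [show σ ^ k * (σ * s 1) = σ ^ (k + 1) * s 1 by
              rw [← mul_assoc, ← pow_succ]]
        _ = (s 1)⁻¹ * braidPi s (k + 1) * (s (k + 2) * σ ^ (k + 1)) := by rw [hC]
        _ = (s 1)⁻¹ * braidPi s (k + 1 + 1) * σ ^ (k + 1) := by
            simp [braidPi, mul_assoc]
  have hB := B (n - 2) le_rfl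
  have hn1 : n - 1 = (n - 2) + 1 := by omega
  have hPi : braidPi s (n - 2 + 1) = σ := by rw [← hn1]
  rw [hbp, hn1, pow_succ', hB, hPi]
  calc σ ^ n = σ * (σ * σ ^ (n - 2)) := by
        rw [← pow_succ', ← pow_succ', show n - 2 + 1 + 1 = n by omega]
    _ = σ * s 1 * ((s 1)⁻¹ * σ * σ ^ (n - 2)) := by simp [mul_assoc]
end

section
/- Let G be a group with elements σ_1, …, σ_{n-1} satisfying the braid relations, and set σ = σ_1⋯σ_{n-1}. Then the sphere relation σ_1 σ_2 ⋯ σ_{n-2} σ_{n-1}² σ_{n-2} ⋯ σ_2 σ_1 = 1 is equivalent to σ^n (σ_1^{-1} σ)^{1-n} = 1. -/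
/-- Ascending product `s a * s (a+1) * ⋯ * s (a+m-1)`. -/
def asc {G : Type*} [Group G] (s : ℕ → G) : ℕ → ℕ → G
  | _, 0 => 1
  | a, m+1 => s a * asc s (a+1) m

/-- Descending product `s (a+m-1) * ⋯ * s (a+1) * s a`. -/
def dsc {G : Type*} [Group G] (s : ℕ → G) (a : ℕ) : ℕ → G
  | 0 => 1
  | m+1 => s (a + m) * dsc s a m

section AuxLemmas

variable {G : Type*} [Group G] (s : ℕ → G)

lemma asc_zero (a : ℕ) : asc s a 0 = 1 := rfl
lemma asc_succ (a m : ℕ) : asc s a (m+1) = s a * asc s (a+1) m := rfl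
lemma dsc_zero (a : ℕ) : dsc s a 0 = 1 := rfl
lemma dsc_succ (a m : ℕ) : dsc s a (m+1) = s (a+m) * dsc s a m := rfl

lemma asc_succ' : ∀ m a, asc s a (m+1) = asc s a m * s (a+m) := by
  intro m
  induction m with
  | zero => intro a; simp [asc_succ, asc_zero]
  | succ m ih =>
    intro a
    rw [asc_succ, ih (a+1), asc_succ, mul_assoc, show a+1+m = a+(m+1) from by omega]

lemma dsc_succ' : ∀ m a, dsc s a (m+1) = dsc s (a+1) m * s a := by
  intro m
  induction m with
  | zero => intro a; simp [dsc_succ, dsc_zero]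
  | succ m ih =>
    intro a
    rw [dsc_succ, ih a, dsc_succ, show a+1+m = a+(m+1) from by omega]
    simp only [mul_assoc]

lemma prod_range_asc : ∀ m, ((List.range m).map fun k => s (k+1)).prod = asc s 1 m := by
  intro m
  induction m with
  | zero => simp [asc_zero]
  | succ m ih =>
    rw [List.range_succ, List.map_append, List.prod_append, ih, asc_succ']
    simp [Nat.add_comm]

lemma prod_range_dsc : ∀ m a, ((List.range m).map fun k => s (a + m - 1 - k)).prod = dsc s a m := by
  intro m
  induction m with
  | zero => intro a; simp [dsc_zero]
  | succ m ih =>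
    intro a
    rw [List.range_succ, List.map_append, List.prod_append]
    have h1 : (fun k => s (a + (m+1) - 1 - k)) = fun k => s ((a+1) + m - 1 - k) := by
      funext k; congr 1; omega
    rw [h1, ih (a+1), dsc_succ' s m a]
    simp only [List.map_cons, List.map_nil, List.prod_cons, List.prod_nil, mul_one]
    congr 2
    omega

/-- cons forms for rewriting in right-associated products -/
lemma consEq2 {a b c d : G} (h : a * b = c * d) (z : G) : a * (b * z) = c * (d * z) := by
  simp only [← mul_assoc]; rw [h]

lemma consEq3 {a b c d e f : G} (h : a * b * c = d * e * f) (z : G) :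
    a * (b * (c * z)) = d * (e * (f * z)) := by
  simp only [← mul_assoc]; rw [h]

end AuxLemmas

/-- the sphere relation σ_1⋯σ_{n-2} σ_{n-1}² σ_{n-2}⋯σ_1 = 1 is
equivalent to σ^n (σ_1^{-1} σ)^{1-n} = 1, where σ = σ_1⋯σ_{n-1}. -/
theorem sphere_relation_equiv {G : Type*} [Group G] (n : ℕ) (hn : 3 ≤ n) (s : ℕ → G)
    (hcomm : ∀ i j, 1 ≤ i → i + 1 < j → j ≤ n - 1 → s i * s j = s j * s i)
    (hbraid : ∀ i, 1 ≤ i → i + 1 ≤ n - 1 →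
      s i * s (i + 1) * s i = s (i + 1) * s i * s (i + 1)) :
    (((List.range (n - 2)).map fun k => s (k + 1)).prod * s (n - 1) ^ 2 *
        ((List.range (n - 2)).map fun k => s (n - 2 - k)).prod = 1) ↔
      braidProd s n ^ n * ((s 1)⁻¹ * braidProd s n) ^ ((1 : ℤ) - n) = 1 := by
  obtain ⟨m, rfl⟩ : ∃ m, n = m + 3 := ⟨n - 3, by omega⟩
  clear hn
  simp only [show m + 3 - 1 = m + 2 from rfl, show m + 3 - 2 = m + 1 from rfl] at *
  -- commutation of a small generator past an ascending product of larger ones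
  have comm_small : ∀ q a j, 1 ≤ j → j + 2 ≤ a → a + q ≤ m + 3 →
      s j * asc s a q = asc s a q * s j := by
    intro q
    induction q with
    | zero => intro a j _ _ _; simp [asc_zero]
    | succ q ih =>
      intro a j h1 h2 h3
      have e1 : s j * s a = s a * s j := hcomm j a h1 (by omega) (by omega)
      rw [asc_succ, ← mul_assoc, e1, mul_assoc, ih (a+1) j h1 (by omega) (by omega),
        ← mul_assoc]
  -- commutation of a big generator past a descending product of smaller ones
  have dsc_comm : ∀ q a j, 1 ≤ a → a + q < j → j ≤ m + 2 →
      s j * dsc s a q = dsc s a q * s j := by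
    intro q
    induction q with
    | zero => intro a j _ _ _; simp [dsc_zero]
    | succ q ih =>
      intro a j h1 h2 h3
      have e1 : s j * s (a+q) = s (a+q) * s j :=
        (hcomm (a+q) j (by omega) (by omega) (by omega)).symm
      rw [dsc_succ, ← mul_assoc, e1, mul_assoc, ih a j h1 (by omega) h3, ← mul_assoc]
  -- shifting a generator through an ascending product containing i and i+1
  have sh1 : ∀ q a i, 1 ≤ a → a ≤ i → i + 2 ≤ a + q → a + q ≤ m + 3 →
      asc s a q * s i = s (i+1) * asc s a q := by
    intro q
    induction q with
    | zero => intro a i _ _ h3 _; omega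
    | succ q ih =>
      intro a i h1 h2 h3 h4
      rcases Nat.lt_or_ge a i with hlt | hge
      · have e := ih (a+1) i (by omega) (by omega) (by omega) (by omega)
        have ecomm : s a * s (i+1) = s (i+1) * s a :=
          hcomm a (i+1) h1 (by omega) (by omega)
        rw [asc_succ, mul_assoc, e, ← mul_assoc, ecomm, mul_assoc]
      · have hai : a = i := le_antisymm h2 hge
        subst hai
        rcases q with _ | p
        · omega
        · have hcs : s a * asc s (a+2) p = asc s (a+2) p * s a :=
            comm_small p (a+2) a (by omega) (by omega) (by omega)
          have hb : s a * s (a+1) * s a = s (a+1) * s a * s (a+1) :=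
            hbraid a (by omega) (by omega)
          calc asc s a (p+2) * s a
              = s a * (s (a+1) * (asc s (a+2) p * s a)) := by
                rw [asc_succ, asc_succ]; simp only [mul_assoc]
            _ = s a * (s (a+1) * (s a * asc s (a+2) p)) := by rw [← hcs]
            _ = s a * s (a+1) * s a * asc s (a+2) p := by simp only [mul_assoc]
            _ = s (a+1) * s a * s (a+1) * asc s (a+2) p := by rw [hb]
            _ = s (a+1) * asc s a (p+2) := by
                rw [asc_succ, asc_succ]; simp only [mul_assoc]
  -- τ := asc s 2 (m+1)
  -- shifting τ through a descending product
  have sh2 : ∀ q a, 2 ≤ a → a + q ≤ m + 2 →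
      asc s 2 (m+1) * dsc s a q = dsc s (a+1) q * asc s 2 (m+1) := by
    intro q
    induction q with
    | zero => intro a _ _; simp [dsc_zero]
    | succ q ih =>
      intro a h1 h2
      have e1 : asc s 2 (m+1) * s (a+q) = s (a+q+1) * asc s 2 (m+1) :=
        sh1 (m+1) 2 (a+q) (by omega) (by omega) (by omega) (by omega)
      rw [dsc_succ, ← mul_assoc, e1, mul_assoc, ih a h1 (by omega), ← mul_assoc,
        dsc_succ, show a+1+q = a+q+1 from by omega, mul_assoc]
  -- τ * s 1
  have T1 : asc s 2 (m+1) * s 1 = s 2 * s 1 * (s 2)⁻¹ * asc s 2 (m+1) := by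
    have hcs : s 1 * asc s 3 m = asc s 3 m * s 1 :=
      comm_small m 3 1 (by omega) (by omega) (by omega)
    calc asc s 2 (m+1) * s 1 = s 2 * (asc s 3 m * s 1) := by
          rw [asc_succ]; simp only [mul_assoc]
      _ = s 2 * (s 1 * asc s 3 m) := by rw [← hcs]
      _ = s 2 * s 1 * (s 2)⁻¹ * (s 2 * asc s 3 m) := by group
      _ = s 2 * s 1 * (s 2)⁻¹ * asc s 2 (m+1) := by rw [asc_succ]
  -- Lemma C : τ^k s1 τ^{-k} as an explicit conjugate
  have lemC : ∀ k, k ≤ m + 1 →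
      asc s 2 (m+1) ^ k * s 1 = dsc s 2 k * s 1 * (dsc s 2 k)⁻¹ * asc s 2 (m+1) ^ k := by
    intro k
    induction k with
    | zero => intro _; simp [dsc_zero]
    | succ k ih =>
      intro hk
      have hsh : asc s 2 (m+1) * dsc s 2 k = dsc s 3 k * asc s 2 (m+1) :=
        sh2 k 2 (by omega) (by omega)
      have hshinv : asc s 2 (m+1) * (dsc s 2 k)⁻¹ = (dsc s 3 k)⁻¹ * asc s 2 (m+1) := by
        calc asc s 2 (m+1) * (dsc s 2 k)⁻¹
            = (dsc s 3 k)⁻¹ * (dsc s 3 k * asc s 2 (m+1) * (dsc s 2 k)⁻¹) := by group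
          _ = (dsc s 3 k)⁻¹ * (asc s 2 (m+1) * dsc s 2 k * (dsc s 2 k)⁻¹) := by rw [hsh]
          _ = (dsc s 3 k)⁻¹ * asc s 2 (m+1) := by group
      have hd2 : dsc s 2 (k+1) = dsc s 3 k * s 2 := by
        rw [dsc_succ' s k 2]
      calc asc s 2 (m+1) ^ (k+1) * s 1
          = asc s 2 (m+1) * (asc s 2 (m+1) ^ k * s 1) := by rw [pow_succ', mul_assoc]
        _ = asc s 2 (m+1) * (dsc s 2 k * s 1 * (dsc s 2 k)⁻¹ * asc s 2 (m+1) ^ k) := by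
            rw [ih (by omega)]
        _ = asc s 2 (m+1) * dsc s 2 k * s 1 * (dsc s 2 k)⁻¹ * asc s 2 (m+1) ^ k := by
            simp only [mul_assoc]
        _ = dsc s 3 k * (asc s 2 (m+1) * s 1) * (dsc s 2 k)⁻¹ * asc s 2 (m+1) ^ k := by
            rw [hsh]; simp only [mul_assoc]
        _ = dsc s 3 k * (s 2 * s 1 * (s 2)⁻¹ * asc s 2 (m+1)) * (dsc s 2 k)⁻¹ *
              asc s 2 (m+1) ^ k := by rw [T1]
        _ = dsc s 3 k * (s 2 * s 1 * (s 2)⁻¹) *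
              (asc s 2 (m+1) * (dsc s 2 k)⁻¹) * asc s 2 (m+1) ^ k := by
            simp only [mul_assoc]
        _ = dsc s 3 k * (s 2 * s 1 * (s 2)⁻¹) *
              ((dsc s 3 k)⁻¹ * asc s 2 (m+1)) * asc s 2 (m+1) ^ k := by rw [hshinv]
        _ = (dsc s 3 k * s 2) * s 1 * (dsc s 3 k * s 2)⁻¹ *
              (asc s 2 (m+1) * asc s 2 (m+1) ^ k) := by
            rw [mul_inv_rev]; simp only [mul_assoc]
        _ = dsc s 2 (k+1) * s 1 * (dsc s 2 (k+1))⁻¹ * asc s 2 (m+1) ^ (k+1) := by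
            rw [hd2, pow_succ']
  -- Lemma D
  have lemD : ∀ k, k + 1 ≤ m + 2 →
      s (k+1) * dsc s 1 k = dsc s 1 k * (dsc s 2 k * s 1 * (dsc s 2 k)⁻¹) := by
    intro k
    induction k with
    | zero => intro _; simp [dsc_zero]
    | succ k ih =>
      intro hk
      have hb : s (k+1) * s (k+2) * s (k+1) = s (k+2) * s (k+1) * s (k+2) :=
        hbraid (k+1) (by omega) (by omega)
      have hb' : s (k+2) * s (k+1) = s (k+1) * s (k+2) * s (k+1) * (s (k+2))⁻¹ := by
        rw [hb]; group
      have hcB : s (k+2) * dsc s 1 k = dsc s 1 k * s (k+2) :=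
        dsc_comm k 1 (k+2) (by omega) (by omega) (by omega)
      have hcB' : (s (k+2))⁻¹ * dsc s 1 k = dsc s 1 k * (s (k+2))⁻¹ := by
        calc (s (k+2))⁻¹ * dsc s 1 k
            = (s (k+2))⁻¹ * (dsc s 1 k * s (k+2)) * (s (k+2))⁻¹ := by group
          _ = (s (k+2))⁻¹ * (s (k+2) * dsc s 1 k) * (s (k+2))⁻¹ := by rw [hcB]
          _ = dsc s 1 k * (s (k+2))⁻¹ := by group
      have hd1 : dsc s 1 (k+1) = s (k+1) * dsc s 1 k := by
        rw [dsc_succ, show 1+k = k+1 from by omega]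
      have hd2 : dsc s 2 (k+1) = s (k+2) * dsc s 2 k := by
        rw [dsc_succ, show 2+k = k+2 from by omega]
      calc s (k+2) * dsc s 1 (k+1)
          = s (k+2) * s (k+1) * dsc s 1 k := by rw [hd1, ← mul_assoc]
        _ = s (k+1) * s (k+2) * s (k+1) * ((s (k+2))⁻¹ * dsc s 1 k) := by
            rw [hb']; simp only [mul_assoc]
        _ = s (k+1) * s (k+2) * s (k+1) * (dsc s 1 k * (s (k+2))⁻¹) := by rw [hcB']
        _ = s (k+1) * s (k+2) * (s (k+1) * dsc s 1 k) * (s (k+2))⁻¹ := by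
            simp only [mul_assoc]
        _ = s (k+1) * s (k+2) * (dsc s 1 k * (dsc s 2 k * s 1 * (dsc s 2 k)⁻¹)) *
              (s (k+2))⁻¹ := by rw [ih (by omega)]
        _ = s (k+1) * (s (k+2) * dsc s 1 k) *
              (dsc s 2 k * s 1 * ((dsc s 2 k)⁻¹ * (s (k+2))⁻¹)) := by
            simp only [mul_assoc]
        _ = s (k+1) * (dsc s 1 k * s (k+2)) *
              (dsc s 2 k * s 1 * ((dsc s 2 k)⁻¹ * (s (k+2))⁻¹)) := by rw [hcB]
        _ = (s (k+1) * dsc s 1 k) *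
              ((s (k+2) * dsc s 2 k) * s 1 * (s (k+2) * dsc s 2 k)⁻¹) := by
            rw [mul_inv_rev]; simp only [mul_assoc]
        _ = dsc s 1 (k+1) * (dsc s 2 (k+1) * s 1 * (dsc s 2 (k+1))⁻¹) := by
            rw [hd1, hd2]
  -- σ = s 1 * τ
  have hc1 : asc s 1 (m+2) = s 1 * asc s 2 (m+1) := rfl
  -- Main lemma : σ^k = dsc 1 k * τ^k
  have lemM : ∀ k, k ≤ m + 2 →
      asc s 1 (m+2) ^ k = dsc s 1 k * asc s 2 (m+1) ^ k := by
    intro k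
    induction k with
    | zero => intro _; simp [dsc_zero]
    | succ k ih =>
      intro hk
      have hd1 : dsc s 1 (k+1) = s (k+1) * dsc s 1 k := by
        rw [dsc_succ, show 1+k = k+1 from by omega]
      calc asc s 1 (m+2) ^ (k+1)
          = (dsc s 1 k * asc s 2 (m+1) ^ k) * (s 1 * asc s 2 (m+1)) := by
            rw [pow_succ, ih (by omega), hc1]
        _ = dsc s 1 k * (asc s 2 (m+1) ^ k * s 1) * asc s 2 (m+1) := by
            simp only [mul_assoc]
        _ = dsc s 1 k * (dsc s 2 k * s 1 * (dsc s 2 k)⁻¹ * asc s 2 (m+1) ^ k) *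
              asc s 2 (m+1) := by rw [lemC k (by omega)]
        _ = (dsc s 1 k * (dsc s 2 k * s 1 * (dsc s 2 k)⁻¹)) *
              (asc s 2 (m+1) ^ k * asc s 2 (m+1)) := by simp only [mul_assoc]
        _ = (s (k+1) * dsc s 1 k) * asc s 2 (m+1) ^ (k+1) := by
            rw [← lemD k (by omega), pow_succ]
        _ = dsc s 1 (k+1) * asc s 2 (m+1) ^ (k+1) := by rw [hd1]
  -- assemble
  have e1 : ((List.range (m+1)).map fun k => s (k + 1)).prod = asc s 1 (m+1) :=
    prod_range_asc s (m+1)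
  have e2 : ((List.range (m+1)).map fun k => s (m + 1 - k)).prod = dsc s 1 (m+1) := by
    have h := prod_range_dsc s (m+1) 1
    have hf : (fun k => s (1 + (m+1) - 1 - k)) = fun k => s (m + 1 - k) := by
      funext k; congr 1; omega
    rwa [hf] at h
  have ebp : braidProd s (m+3) = asc s 1 (m+2) := by
    have := prod_range_asc s (m+2)
    simpa [braidProd] using this
  have hτ : (s 1)⁻¹ * braidProd s (m+3) = asc s 2 (m+1) := by
    rw [ebp, hc1, inv_mul_cancel_left]
  have hcast : ((1 : ℤ) - (m+3 : ℕ)) = -((m+2 : ℕ) : ℤ) := by push_cast; ring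
  have hzp : asc s 2 (m+1) ^ ((1 : ℤ) - ((m+3 : ℕ) : ℤ)) = (asc s 2 (m+1) ^ (m+2))⁻¹ := by
    rw [hcast, zpow_neg, zpow_natCast]
  -- the key identity : σ^(m+3) = X * τ^(m+2)
  have key : asc s 1 (m+2) ^ (m+3) =
      (asc s 1 (m+1) * s (m+2) ^ 2 * dsc s 1 (m+1)) * asc s 2 (m+1) ^ (m+2) := by
    have h1 : asc s 1 (m+2) ^ (m+3) = asc s 1 (m+2) * asc s 1 (m+2) ^ (m+2) := by
      rw [← pow_succ']
    have h2 : asc s 1 (m+2) = asc s 1 (m+1) * s (m+2) := by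
      rw [asc_succ' s (m+1) 1, show 1+(m+1) = m+2 from by omega]
    have h3 : dsc s 1 (m+2) = s (m+2) * dsc s 1 (m+1) := by
      rw [dsc_succ, show 1+(m+1) = m+2 from by omega]
    rw [h1, lemM (m+2) (by omega), h3, h2, sq]
    simp only [mul_assoc]
  rw [e1, e2, hτ, hzp, ebp, key, mul_inv_cancel_right]
end

section
/- In the braid group B_n (presented by generators σ_1,…,σ_{n-1} and the braid relations), the elements s_{i,j} = σ_{j-1}⋯σ_{i+1} σ_i² σ_{i+1}^{-1}⋯σ_{j-1}^{-1} for 1 ≤ i < j ≤ n satisfy the Burau relations: (a) s_{i,j} s_{k,l} = s_{k,l} s_{i,j} for i < j < k < l and for i < k < l < j; (b) s_{i,j} s_{i,k} s_{j,k} = s_{i,k} s_{j,k} s_{i,j} for i < j < k; (c) s_{i,k} s_{j,k} s_{i,j} = s_{j,k} s_{i,j} s_{i,k} for i < j < k; (d) s_{i,k} s_{j,k} s_{j,l} s_{j,k}^{-1} = s_{j,k} s_{j,l} s_{j,k}^{-1} s_{i,k} for i < j < k < l. -/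
/-- The element s_{i,j} = σ_{j-1}⋯σ_{i+1} σ_i² σ_{i+1}^{-1}⋯σ_{j-1}^{-1}. -/
def burau {G : Type*} [Group G] (s : ℕ → G) (i j : ℕ) : G :=
  ((List.range (j - 1 - i)).map fun k => s (j - 1 - k)).prod * s i ^ 2 *
    (((List.range (j - 1 - i)).map fun k => s (j - 1 - k)).prod)⁻¹

section aux
variable {G : Type*} [Group G]

def bdesc (s : ℕ → G) (a b : ℕ) : G :=
  ((List.range (b + 1 - a)).map fun k => s (b - k)).prod

lemma bdesc_eq_one (s : ℕ → G) {a b : ℕ} (h : b + 1 ≤ a) : bdesc s a b = 1 := by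
  simp [bdesc, Nat.sub_eq_zero_of_le h]

lemma bdesc_peel_top (s : ℕ → G) {a b : ℕ} (h : a ≤ b + 1) :
    bdesc s a (b + 1) = s (b + 1) * bdesc s a b := by
  have h1 : b + 1 + 1 - a = (b + 1 - a) + 1 := by omega
  rw [bdesc, h1, List.range_succ_eq_map]
  simp only [List.map_cons, List.prod_cons, Nat.sub_zero, List.map_map]
  rw [bdesc]
  congr 2
  apply List.map_congr_left
  intro k _
  simp only [Function.comp]
  congr 1
  omega

lemma bdesc_peel_bot (s : ℕ → G) {a b : ℕ} (h : a ≤ b) :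
    bdesc s a b = bdesc s (a + 1) b * s a := by
  have h1 : b + 1 - a = (b - a) + 1 := by omega
  rw [bdesc, h1, List.range_succ]
  rw [List.map_append, List.prod_append]
  simp only [List.map_cons, List.map_nil, List.prod_cons, List.prod_nil, mul_one]
  have h2 : b - (b - a) = a := by omega
  rw [h2, bdesc]
  have h3 : b + 1 - (a + 1) = b - a := by omega
  rw [h3]

lemma commute_bdesc {s : ℕ → G} {x : G} {a b : ℕ}
    (h : ∀ u, a ≤ u → u ≤ b → Commute x (s u)) : Commute x (bdesc s a b) := by
  apply Commute.list_prod_right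
  intro y hy
  simp only [List.mem_map, List.mem_range] at hy
  obtain ⟨k, hk, rfl⟩ := hy
  exact h (b - k) (by omega) (by omega)

lemma bdesc_split (s : ℕ → G) {a c b : ℕ} (h1 : 1 ≤ a) (h2 : a ≤ c) (h3 : c ≤ b + 1) :
    bdesc s a b = bdesc s c b * bdesc s a (c - 1) := by
  induction c, h2 using Nat.le_induction with
  | base =>
    rw [bdesc_eq_one s (show a - 1 + 1 ≤ a by omega), mul_one]
  | succ c hc ih =>
    have hcb : c ≤ b := by omega
    have e1 : bdesc s a c = s c * bdesc s a (c - 1) := by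
      have := bdesc_peel_top s (a := a) (b := c - 1) (by omega)
      rw [show c - 1 + 1 = c by omega] at this
      exact this
    rw [ih (by omega), bdesc_peel_bot s hcb, mul_assoc,
      show c + 1 - 1 = c by omega, e1]


theorem burau' {G : Type*} [Group G] (s : ℕ → G) (i j : ℕ) :
    burau s i j = bdesc s (i + 1) (j - 1) * s i ^ 2 * (bdesc s (i + 1) (j - 1))⁻¹ := by
  rw [burau, bdesc, Nat.succ_sub_succ]

lemma burau_succ (s : ℕ → G) {i m : ℕ} (h : i ≤ m) :
    burau s i (m + 1) = s m * burau s i m * (s m)⁻¹ := by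
  rcases eq_or_lt_of_le h with rfl | him
  · rw [burau', burau', show i + 1 - 1 = i by omega,
      bdesc_eq_one s (show i - 1 + 1 ≤ i + 1 by omega),
      bdesc_eq_one s (show i + 1 ≤ i + 1 by omega)]
    group
  · have e1 : bdesc s (i + 1) m = s m * bdesc s (i + 1) (m - 1) := by
      have := bdesc_peel_top s (a := i + 1) (b := m - 1) (by omega)
      rw [show m - 1 + 1 = m by omega] at this
      exact this
    rw [burau', burau', show m + 1 - 1 = m by omega, e1]
    simp only [mul_inv_rev, mul_assoc]

lemma burau_base (s : ℕ → G) (i : ℕ) : burau s i (i + 1) = s i ^ 2 := by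
  rw [burau', show i + 1 - 1 = i by omega, bdesc_eq_one s (show i + 1 ≤ i + 1 by omega)]
  group

variable {n : ℕ} {s : ℕ → G}

lemma comm_s_burau (hcomm : ∀ i j, 1 ≤ i → i + 1 < j → j ≤ n - 1 → s i * s j = s j * s i)
    {t k l : ℕ} (h1 : 1 ≤ t) (h2 : t ≤ n - 1) (h3 : 1 ≤ k) (h4 : k < l) (h5 : l ≤ n)
    (h6 : t + 1 < k ∨ l < t) : Commute (s t) (burau s k l) := by
  have key : ∀ u, k ≤ u → u ≤ l - 1 → Commute (s t) (s u) := by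
    intro u hu1 hu2
    rcases h6 with h | h
    · exact hcomm t u h1 (by omega) (by omega)
    · exact (Commute.symm (hcomm u t (by omega) (by omega) h2))
  have hd : Commute (s t) (bdesc s (k + 1) (l - 1)) :=
    commute_bdesc (fun u hu1 hu2 => key u (by omega) (by omega))
  rw [burau']
  exact (hd.mul_right ((key k le_rfl (by omega)).pow_right 2)).mul_right hd.inv_right

lemma comm_burau_burau (hcomm : ∀ i j, 1 ≤ i → i + 1 < j → j ≤ n - 1 → s i * s j = s j * s i)
    {i j k l : ℕ} (h1 : 1 ≤ i) (h2 : i < j) (h3 : j < k) (h4 : k < l) (h5 : l ≤ n) :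
    Commute (burau s i j) (burau s k l) := by
  have key : ∀ u, i ≤ u → u ≤ j - 1 → Commute (s u) (burau s k l) := by
    intro u hu1 hu2
    exact comm_s_burau hcomm (by omega) (by omega) (by omega) h4 h5 (Or.inl (by omega))
  have hd : Commute (burau s k l) (bdesc s (i + 1) (j - 1)) :=
    commute_bdesc (fun u hu1 hu2 => (key u (by omega) (by omega)).symm)
  have hp : Commute (burau s k l) (s i ^ 2) := ((key i le_rfl (by omega)).symm).pow_right 2
  rw [burau' s i j]
  exact ((hd.mul_right hp).mul_right hd.inv_right).symm

lemma bdesc_shift (hcomm : ∀ i j, 1 ≤ i → i + 1 < j → j ≤ n - 1 → s i * s j = s j * s i)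
    (hbraid : ∀ i, 1 ≤ i → i + 1 ≤ n - 1 →
      s i * s (i + 1) * s i = s (i + 1) * s i * s (i + 1))
    {a t b : ℕ} (h1 : 1 ≤ a) (h2 : a + 1 ≤ t) (h3 : t ≤ b) (h4 : b ≤ n - 1) :
    bdesc s a b * s t = s (t - 1) * bdesc s a b := by
  have s2 : bdesc s a t = s t * bdesc s a (t - 1) := by
    have := bdesc_peel_top s (a := a) (b := t - 1) (by omega)
    rw [show t - 1 + 1 = t by omega] at this; exact this
  have s3 : bdesc s a (t - 1) = s (t - 1) * bdesc s a (t - 2) := by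
    have := bdesc_peel_top s (a := a) (b := t - 2) (by omega)
    rw [show t - 2 + 1 = t - 1 by omega] at this; exact this
  have e0 : bdesc s a b = bdesc s (t + 1) b * (s t * (s (t - 1) * bdesc s a (t - 2))) := by
    have s1 := bdesc_split s (a := a) (c := t + 1) (b := b) h1 (by omega) (by omega)
    rw [show t + 1 - 1 = t by omega] at s1
    rw [s1, s2, s3]
  have c1 : Commute (bdesc s a (t - 2)) (s t) :=
    (commute_bdesc (fun u hu1 hu2 => Commute.symm (hcomm u t (by omega) (by omega) (by omega)))).symm
  have c2 : Commute (bdesc s (t + 1) b) (s (t - 1)) :=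
    (commute_bdesc (fun u hu1 hu2 => hcomm (t - 1) u (by omega) (by omega) (by omega))).symm
  have hb : s (t - 1) * s t * s (t - 1) = s t * s (t - 1) * s t := by
    have := hbraid (t - 1) (by omega) (by omega)
    rw [show t - 1 + 1 = t by omega] at this; exact this
  have hb' : ∀ x : G, s t * (s (t - 1) * (s t * x)) = s (t - 1) * (s t * (s (t - 1) * x)) := by
    intro x
    have := congrArg (· * x) hb
    simp only [mul_assoc] at this
    exact this.symm
  calc bdesc s a b * s t
      = bdesc s (t + 1) b * (s t * (s (t - 1) * (bdesc s a (t - 2) * s t))) := by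
        rw [e0]; simp only [mul_assoc]
    _ = bdesc s (t + 1) b * (s t * (s (t - 1) * (s t * bdesc s a (t - 2)))) := by rw [c1.eq]
    _ = bdesc s (t + 1) b * (s (t - 1) * (s t * (s (t - 1) * bdesc s a (t - 2)))) := by rw [hb']
    _ = s (t - 1) * (bdesc s (t + 1) b * (s t * (s (t - 1) * bdesc s a (t - 2)))) := by
        rw [← mul_assoc, c2.eq, mul_assoc]
    _ = s (t - 1) * bdesc s a b := by rw [e0]

lemma conj_list (g : G) (s : ℕ → G) :
    ∀ L : List ℕ, (∀ u ∈ L, g * s u * g⁻¹ = s (u + 1)) →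
      g * (L.map s).prod * g⁻¹ = ((L.map fun u => u + 1).map s).prod
  | [], _ => by simp
  | (u :: L), h => by
    simp only [List.map_cons, List.prod_cons]
    have e : g * (s u * (L.map s).prod) * g⁻¹ =
        (g * s u * g⁻¹) * (g * (L.map s).prod * g⁻¹) := by group
    rw [e, h u (by simp), conj_list g s L (fun v hv => h v (by simp [hv]))]

lemma conj_bdesc {g : G} {a b : ℕ} (ha : 1 ≤ a)
    (h : ∀ u, a ≤ u → u ≤ b → g * s u * g⁻¹ = s (u + 1)) :
    g * bdesc s a b * g⁻¹ = bdesc s (a + 1) (b + 1) := by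
  unfold bdesc
  rw [show b + 1 + 1 - (a + 1) = b + 1 - a by omega]
  have e1 : (List.range (b + 1 - a)).map (fun k => s (b - k)) =
      ((List.range (b + 1 - a)).map (fun k => b - k)).map s := by
    rw [List.map_map]; rfl
  rw [e1, conj_list g s _ (by
    intro u hu
    simp only [List.mem_map, List.mem_range] at hu
    obtain ⟨k, hk, rfl⟩ := hu
    exact h (b - k) (by omega) (by omega))]
  rw [List.map_map, List.map_map]
  congr 1
  apply List.map_congr_left
  intro k hk
  simp only [List.mem_range] at hk
  simp only [Function.comp]
  congr 1
  omega

lemma conj_burau {g : G} {k l : ℕ} (hk : 1 ≤ k) (hkl : k < l)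
    (h : ∀ u, k ≤ u → u ≤ l - 1 → g * s u * g⁻¹ = s (u + 1)) :
    g * burau s k l * g⁻¹ = burau s (k + 1) (l + 1) := by
  rw [burau' s k l, burau' s (k + 1) (l + 1)]
  have e1 : g * bdesc s (k + 1) (l - 1) * g⁻¹ = bdesc s (k + 1 + 1) (l + 1 - 1) := by
    have := conj_bdesc (s := s) (g := g) (a := k + 1) (b := l - 1) (by omega)
      (fun u h1 h2 => h u (by omega) h2)
    rw [show l + 1 - 1 = l - 1 + 1 by omega]
    exact this
  have e2 : g * s k ^ 2 * g⁻¹ = s (k + 1) ^ 2 := by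
    have h0 := h k le_rfl (by omega)
    have e : g * s k ^ 2 * g⁻¹ = (g * s k * g⁻¹) * (g * s k * g⁻¹) := by
      rw [sq]; group
    rw [e, h0, sq]
  have e3 : g * (bdesc s (k + 1) (l - 1) * s k ^ 2 * (bdesc s (k + 1) (l - 1))⁻¹) * g⁻¹ =
      (g * bdesc s (k + 1) (l - 1) * g⁻¹) * (g * s k ^ 2 * g⁻¹) *
        (g * bdesc s (k + 1) (l - 1) * g⁻¹)⁻¹ := by group
  rw [e3, e1, e2]

lemma Kbase {p q : G} (hbr : p * q * p = q * p * q) :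
    Commute (p ^ 2) (q * p ^ 2 * q) := by
  have hbr' : ∀ x : G, p * (q * (p * x)) = q * (p * (q * x)) := fun x => by
    simpa [mul_assoc] using congrArg (· * x) hbr
  have hb2 : p * (q * p) = q * (p * q) := by simpa [mul_assoc] using hbr
  show p ^ 2 * (q * p ^ 2 * q) = (q * p ^ 2 * q) * p ^ 2
  have lhs : p ^ 2 * (q * p ^ 2 * q) = q * (p * (q * (q * (p * q)))) := by
    simp only [pow_two, mul_assoc]
    rw [hbr' (p * q), hbr' (q * (p * q))]
  have rhs : (q * p ^ 2 * q) * p ^ 2 = q * (p * (q * (q * (p * q)))) := by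
    simp only [pow_two, mul_assoc]
    rw [hbr' p, hb2]
  rw [lhs, rhs]

lemma Kstep {p q w : G} (hbr : p * q * p = q * p * q) (hwq : Commute w q)
    (hK : Commute w (p * w * p)) :
    Commute (p * w * p⁻¹) (q * (p * w * p⁻¹) * q) := by
  have h1 : Commute w (q * (p * w * p) * q⁻¹) :=
    (hwq.mul_right hK).mul_right hwq.inv_right
  have h2 := h1.map (MulAut.conj p).toMonoidHom
  simp only [MulEquiv.coe_toMonoidHom, MulAut.conj_apply] at h2
  have e : p * (q * (p * w * p) * q⁻¹) * p⁻¹ = q * (p * w * p⁻¹) * q := by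
    have hbr' : ∀ x : G, p * (q * (p * x)) = q * (p * (q * x)) := fun x => by
      simpa [mul_assoc] using congrArg (· * x) hbr
    have hqpq : ∀ x : G, q * (p * (q⁻¹ * x)) = p⁻¹ * (q * (p * x)) := by
      intro x
      have := hbr' (q⁻¹ * x)
      rw [show q * (p * (q * (q⁻¹ * x))) = q * (p * x) by simp [mul_assoc]] at this
      rw [← this]
      simp [mul_assoc]
    have hwq' : ∀ x : G, q * (w * x) = w * (q * x) := fun x => by
      rw [← mul_assoc, ← hwq.eq, mul_assoc]
    simp only [mul_assoc, mul_inv_rev]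
    rw [hbr' (w * (p * (q⁻¹ * p⁻¹))), hwq' (p * (q⁻¹ * p⁻¹)), hqpq p⁻¹]
    simp
  rw [e] at h2
  exact h2

lemma lemK (hcomm : ∀ i j, 1 ≤ i → i + 1 < j → j ≤ n - 1 → s i * s j = s j * s i)
    (hbraid : ∀ i, 1 ≤ i → i + 1 ≤ n - 1 →
      s i * s (i + 1) * s i = s (i + 1) * s i * s (i + 1))
    {i m : ℕ} (h1 : 1 ≤ i) (h2 : i < m) (h3 : m ≤ n - 1) :
    Commute (burau s i m) (s m * burau s i m * s m) := by
  induction m, h2 using Nat.le_induction with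
  | base =>
    rw [burau_base]
    exact Kbase (hbraid i h1 h3)
  | succ m hm ih =>
    have ihm := ih (by omega)
    have hwq : Commute (burau s i m) (s (m + 1)) :=
      (comm_s_burau hcomm (by omega) h3 (by omega) (by omega) (by omega)
        (Or.inr (by omega))).symm
    have hbr : s m * s (m + 1) * s m = s (m + 1) * s m * s (m + 1) :=
      hbraid m (by omega) h3
    rw [burau_succ s (show i ≤ m by omega)]
    exact Kstep hbr hwq ihm

lemma Gbase {p q w : G} (hbr : p * q * p = q * p * q) (hwq : Commute w q) :
    Commute (p * w * p⁻¹) (p ^ 2 * (q * p ^ 2 * q⁻¹) * (p ^ 2)⁻¹) := by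
  have h1 : Commute w (q ^ 2) := hwq.pow_right 2
  have h2 := h1.map (MulAut.conj p).toMonoidHom
  simp only [MulEquiv.coe_toMonoidHom, MulAut.conj_apply] at h2
  have e : p * q ^ 2 * p⁻¹ = p ^ 2 * (q * p ^ 2 * q⁻¹) * (p ^ 2)⁻¹ := by
    have hbr' : ∀ x : G, p * (q * (p * x)) = q * (p * (q * x)) := fun x => by
      simpa [mul_assoc] using congrArg (· * x) hbr
    have hqpq : ∀ x : G, q * (p * (q⁻¹ * x)) = p⁻¹ * (q * (p * x)) := by
      intro x
      have := hbr' (q⁻¹ * x)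
      rw [show q * (p * (q * (q⁻¹ * x))) = q * (p * x) by simp [mul_assoc]] at this
      rw [← this]
      simp [mul_assoc]
    simp only [pow_two, mul_inv_rev, mul_assoc]
    rw [hbr' (p * (q⁻¹ * (p⁻¹ * p⁻¹))), hqpq (p⁻¹ * p⁻¹)]
    simp [mul_assoc]
  rw [e] at h2
  exact h2

lemma Gstep {p q v w : G} (hbr : p * q * p = q * p * q) (hwq : Commute w q)
    (hvq : Commute v q) (hIH : Commute w (v * (p * v * p⁻¹) * v⁻¹)) :
    Commute (p * w * p⁻¹)
      ((p * v * p⁻¹) * (q * (p * v * p⁻¹) * q⁻¹) * (p * v * p⁻¹)⁻¹) := by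
  have h1 : Commute w (q * (v * (p * v * p⁻¹) * v⁻¹) * q⁻¹) :=
    (hwq.mul_right hIH).mul_right hwq.inv_right
  have h2 := h1.map (MulAut.conj p).toMonoidHom
  simp only [MulEquiv.coe_toMonoidHom, MulAut.conj_apply] at h2
  have e : p * (q * (v * (p * v * p⁻¹) * v⁻¹) * q⁻¹) * p⁻¹ =
      (p * v * p⁻¹) * (q * (p * v * p⁻¹) * q⁻¹) * (p * v * p⁻¹)⁻¹ := by
    have hbr' : ∀ x : G, p * (q * (p * x)) = q * (p * (q * x)) := fun x => by
      simpa [mul_assoc] using congrArg (· * x) hbr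
    have hqpq : ∀ x : G, q * (p * (q⁻¹ * x)) = p⁻¹ * (q * (p * x)) := by
      intro x
      have := hbr' (q⁻¹ * x)
      rw [show q * (p * (q * (q⁻¹ * x))) = q * (p * x) by simp [mul_assoc]] at this
      rw [← this]
      simp [mul_assoc]
    have hvq' : ∀ x : G, q * (v * x) = v * (q * x) := fun x => by
      rw [← mul_assoc, ← hvq.eq, mul_assoc]
    have hvq'' : ∀ x : G, q⁻¹ * (v * x) = v * (q⁻¹ * x) := fun x => by
      rw [← mul_assoc, (hvq.inv_right.symm).eq, mul_assoc]
    have hbrinv : ∀ x : G, q⁻¹ * (p⁻¹ * (q⁻¹ * x)) = p⁻¹ * (q⁻¹ * (p⁻¹ * x)) := by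
      intro x
      have h0 : q⁻¹ * p⁻¹ * q⁻¹ = p⁻¹ * q⁻¹ * p⁻¹ := by
        have := congrArg Inv.inv hbr
        simp only [mul_inv_rev] at this
        rw [← mul_assoc, ← mul_assoc] at this
        exact this.symm
      simpa [mul_assoc] using congrArg (· * x) h0
    have hviq : ∀ x : G, q⁻¹ * (v⁻¹ * x) = v⁻¹ * (q⁻¹ * x) := fun x => by
      rw [← mul_assoc, (hvq.inv_left.inv_right.symm).eq, mul_assoc]
    simp only [mul_inv_rev, inv_inv, mul_assoc]
    rw [← hqpq (v * (p⁻¹ * (q⁻¹ * (p * (v⁻¹ * p⁻¹)))))]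
    rw [← hvq' (p * (q⁻¹ * (v * (p⁻¹ * (q⁻¹ * (p * (v⁻¹ * p⁻¹)))))))]
    rw [hvq'' (p⁻¹ * (q⁻¹ * (p * (v⁻¹ * p⁻¹))))]
    rw [hbrinv (p * (v⁻¹ * p⁻¹))]
    simp only [inv_mul_cancel_left]
    rw [hviq p⁻¹]
  rw [e] at h2
  exact h2

lemma lemG (hcomm : ∀ i j, 1 ≤ i → i + 1 < j → j ≤ n - 1 → s i * s j = s j * s i)
    (hbraid : ∀ i, 1 ≤ i → i + 1 ≤ n - 1 →
      s i * s (i + 1) * s i = s (i + 1) * s i * s (i + 1))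
    {i j k : ℕ} (h1 : 1 ≤ i) (h2 : i < j) (h3 : j < k) (h4 : k ≤ n - 1) :
    Commute (burau s i k)
      (burau s j k * (s k * burau s j k * (s k)⁻¹) * (burau s j k)⁻¹) := by
  induction k, h3 using Nat.le_induction with
  | base =>
    have hwq : Commute (burau s i j) (s (j + 1)) :=
      (comm_s_burau hcomm (by omega) h4 (by omega) h2 (by omega) (Or.inr (by omega))).symm
    rw [burau_base s j, burau_succ s (le_of_lt h2)]
    exact Gbase (hbraid j (by omega) h4) hwq
  | succ k hk ih =>
    have ihk := ih (by omega)
    have hwq : Commute (burau s i k) (s (k + 1)) :=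
      (comm_s_burau hcomm (by omega) h4 (by omega) (by omega) (by omega)
        (Or.inr (by omega))).symm
    have hvq : Commute (burau s j k) (s (k + 1)) :=
      (comm_s_burau hcomm (by omega) h4 (by omega) hk (by omega)
        (Or.inr (by omega))).symm
    have hbr : s k * s (k + 1) * s k = s (k + 1) * s k * s (k + 1) :=
      hbraid k (by omega) h4
    rw [burau_succ s (show i ≤ k by omega), burau_succ s (show j ≤ k by omega)]
    exact Gstep hbr hwq hvq ihk

lemma burau_decomp {i j k : ℕ} (h1 : 1 ≤ i) (h2 : i < j) (h3 : j < k) :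
    burau s i k =
      bdesc s (j + 1) (k - 1) * (s j * burau s i j * (s j)⁻¹) *
        (bdesc s (j + 1) (k - 1))⁻¹ := by
  rw [burau' s i k, burau' s i j]
  have a2 : bdesc s (i + 1) j = s j * bdesc s (i + 1) (j - 1) := by
    have := bdesc_peel_top s (a := i + 1) (b := j - 1) (by omega)
    rw [show j - 1 + 1 = j by omega] at this; exact this
  have e1 : bdesc s (i + 1) (k - 1) =
      bdesc s (j + 1) (k - 1) * (s j * bdesc s (i + 1) (j - 1)) := by
    have a1 := bdesc_split s (a := i + 1) (c := j + 1) (b := k - 1)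
      (by omega) (by omega) (by omega)
    rw [show j + 1 - 1 = j by omega] at a1
    rw [a1, a2]
  rw [e1]
  group

lemma Kc_helper {a t : G} (hK : Commute t (a * t * a)) :
    Commute (a * t * a⁻¹) (a ^ 2 * t) := by
  have hK' : ∀ x : G, t * (a * (t * (a * x))) = a * (t * (a * (t * x))) := fun x => by
    simpa [mul_assoc] using congrArg (· * x) hK.eq
  show (a * t * a⁻¹) * (a ^ 2 * t) = (a ^ 2 * t) * (a * t * a⁻¹)
  simp only [pow_two, mul_assoc, inv_mul_cancel_left]
  rw [← hK' a⁻¹]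
  simp [mul_assoc]

lemma conj_swap {a b m : G} (h : Commute a b) :
    a * (b * m * b⁻¹) * a⁻¹ = b * (a * m * a⁻¹) * b⁻¹ := by
  have h1 : ∀ x : G, a * (b * x) = b * (a * x) := fun x => by
    rw [← mul_assoc, h.eq, mul_assoc]
  have h2 : b⁻¹ * a⁻¹ = a⁻¹ * b⁻¹ := (h.symm.inv_left.inv_right).eq
  simp only [mul_assoc]
  rw [h1 (m * (b⁻¹ * a⁻¹)), h2]

end aux


/-- the elements s_{i,j}, 1 ≤ i < j ≤ n, built from braid generators
satisfy the Burau relations. -/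
theorem burau_relations {G : Type*} [Group G] (n : ℕ) (hn : 2 ≤ n) (s : ℕ → G)
    (hcomm : ∀ i j, 1 ≤ i → i + 1 < j → j ≤ n - 1 → s i * s j = s j * s i)
    (hbraid : ∀ i, 1 ≤ i → i + 1 ≤ n - 1 →
      s i * s (i + 1) * s i = s (i + 1) * s i * s (i + 1)) :
    (∀ i j k l, 1 ≤ i → i < j → j < k → k < l → l ≤ n →
      burau s i j * burau s k l = burau s k l * burau s i j) ∧
    (∀ i k l j, 1 ≤ i → i < k → k < l → l < j → j ≤ n →
      burau s i j * burau s k l = burau s k l * burau s i j) ∧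
    (∀ i j k, 1 ≤ i → i < j → j < k → k ≤ n →
      burau s i j * burau s i k * burau s j k = burau s i k * burau s j k * burau s i j) ∧
    (∀ i j k, 1 ≤ i → i < j → j < k → k ≤ n →
      burau s i k * burau s j k * burau s i j = burau s j k * burau s i j * burau s i k) ∧
    (∀ i j k l, 1 ≤ i → i < j → j < k → k < l → l ≤ n →
      burau s i k * burau s j k * burau s j l * (burau s j k)⁻¹ =
        burau s j k * burau s j l * (burau s j k)⁻¹ * burau s i k) := by
  refine ⟨?_, ?_, ?_, ?_, ?_⟩
  · -- disjoint
    intro i j k l hi hij hjk hkl hln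
    exact (comm_burau_burau hcomm hi hij hjk hkl hln).eq
  · -- nested
    intro i k l j hi hik hkl hlj hjn
    set D := bdesc s (i + 1) (j - 1) with hD
    have hshift : ∀ u, k ≤ u → u ≤ l - 1 → D⁻¹ * s u * (D⁻¹)⁻¹ = s (u + 1) := by
      intro u hu1 hu2
      have h0 := bdesc_shift hcomm hbraid (a := i + 1) (t := u + 1) (b := j - 1)
        (by omega) (by omega) (by omega) (by omega)
      rw [show u + 1 - 1 = u by omega] at h0
      rw [← hD] at h0
      rw [inv_inv, mul_assoc, ← h0, inv_mul_cancel_left]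
    have hconj : D⁻¹ * burau s k l * (D⁻¹)⁻¹ = burau s (k + 1) (l + 1) :=
      conj_burau (by omega) hkl hshift
    rw [inv_inv] at hconj
    have hc : Commute (s i) (burau s (k + 1) (l + 1)) :=
      comm_s_burau hcomm hi (by omega) (by omega) (by omega) (by omega)
        (Or.inl (by omega))
    have hc2 : Commute (s i ^ 2) (D⁻¹ * burau s k l * D) := by
      rw [hconj]; exact hc.pow_left 2
    have hc3 := hc2.map (MulAut.conj D).toMonoidHom
    simp only [MulEquiv.coe_toMonoidHom, MulAut.conj_apply] at hc3
    have e : D * (D⁻¹ * burau s k l * D) * D⁻¹ = burau s k l := by group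
    rw [e] at hc3
    rw [burau' s i j]
    exact hc3.eq
  · -- relation (b)
    intro i j k hi hij hjk hkn
    set A := bdesc s (j + 1) (k - 1) with hA'
    set t := burau s i j with ht
    have hx : burau s i k = A * (s j * t * (s j)⁻¹) * A⁻¹ :=
      burau_decomp hi hij hjk
    have hy : burau s j k = A * s j ^ 2 * A⁻¹ := burau' s j k
    have hK : Commute t (s j * t * s j) := lemK hcomm hbraid hi hij (by omega)
    have hA : Commute t A := commute_bdesc (fun u hu1 hu2 =>
      (comm_s_burau hcomm (by omega) (by omega) hi hij (by omega)
        (Or.inr (by omega))).symm)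
    have exy : burau s i k * burau s j k = A * (s j * t * s j) * A⁻¹ := by
      rw [hx, hy]; group
    have hc : Commute t (A * (s j * t * s j) * A⁻¹) :=
      (hA.mul_right hK).mul_right hA.inv_right
    have := hc.eq
    rw [← exy] at this
    rw [mul_assoc, this]
  · -- relation (c)
    intro i j k hi hij hjk hkn
    set A := bdesc s (j + 1) (k - 1) with hA'
    set t := burau s i j with ht
    have hx : burau s i k = A * (s j * t * (s j)⁻¹) * A⁻¹ :=
      burau_decomp hi hij hjk
    have hy : burau s j k = A * s j ^ 2 * A⁻¹ := burau' s j k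
    have hK : Commute t (s j * t * s j) := lemK hcomm hbraid hi hij (by omega)
    have hA : Commute t A := commute_bdesc (fun u hu1 hu2 =>
      (comm_s_burau hcomm (by omega) (by omega) hi hij (by omega)
        (Or.inr (by omega))).symm)
    have key := (Kc_helper (a := s j) hK).map (MulAut.conj A).toMonoidHom
    simp only [MulEquiv.coe_toMonoidHom, MulAut.conj_apply] at key
    have eyt : A * (s j ^ 2 * t) * A⁻¹ = burau s j k * t := by
      rw [hy]
      simp only [mul_assoc]
      rw [hA.inv_right.eq]
    rw [← hx, eyt] at key
    have := key.eq
    simp only [mul_assoc] at this ⊢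
    exact this
  · -- relation (d)
    intro i j k l hi hij hjk hkl hln
    set y := burau s j k with hy'
    set q := s k with hq'
    set F := bdesc s (k + 1) (l - 1) with hF'
    have hdec : burau s j l = F * (q * y * q⁻¹) * F⁻¹ :=
      burau_decomp (by omega) hjk hkl
    have hG : Commute (burau s i k) (y * (q * y * q⁻¹) * y⁻¹) :=
      lemG hcomm hbraid hi hij hjk (by omega)
    have hyF : Commute y F := commute_bdesc (fun u hu1 hu2 =>
      (comm_s_burau hcomm (by omega) (by omega) (by omega) hjk (by omega)
        (Or.inr (by omega))).symm)
    have hxF : Commute (burau s i k) F := commute_bdesc (fun u hu1 hu2 =>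
      (comm_s_burau hcomm (by omega) (by omega) hi (by omega) (by omega)
        (Or.inr (by omega))).symm)
    have e1 : y * burau s j l * y⁻¹ = F * (y * (q * y * q⁻¹) * y⁻¹) * F⁻¹ := by
      rw [hdec]
      exact conj_swap hyF
    have hc : Commute (burau s i k) (y * burau s j l * y⁻¹) := by
      rw [e1]
      exact (hxF.mul_right hG).mul_right hxF.inv_right
    have := hc.eq
    simp only [mul_assoc] at this ⊢
    exact this
end

section
/- In the monoid P presented by generators σ_1,…,σ_{n-1}, σ_1^{-1},…,σ_{n-1}^{-1}, ε with the inverse braid monoid relations (σ_iσ_i^{-1} = σ_i^{-1}σ_i = 1; εσ_i = σ_iε for i ≥ 2; εσ_1ε = σ_1εσ_1ε = εσ_1εσ_1; ε = ε² = εσ_1² = σ_1²ε) together with the braid relations, define ε_1 = ε and ε_{i+1} = σ_i ε_i σ_i^{-1}. Then the following hold for all valid indices: ε_jσ_i = σ_iε_j for j ≠ i, i+1; ε_iσ_i = σ_iε_{i+1}; ε_{i+1}σ_i = σ_iε_i; ε_i² = ε_i; ε_{i+1}σ_i² = σ_i²ε_{i+1} = ε_{i+1}; and ε_iε_{i+1}σ_i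 = σ_iε_iε_{i+1} = ε_iε_{i+1}. -/
/-- auxiliary: z-form of an equation between products. -/
theorem zf_aux {M : Type*} [Monoid M] {a b c d : M} (h : a * b = c * d) (z : M) :
    a * (b * z) = c * (d * z) := by rw [← mul_assoc, h, mul_assoc]

/-- in the monoid presented by generators σ_i, σ_i⁻¹, ε and the inverse
braid monoid relations (2.3) together with the braid relations (2.1) (hence in any
monoid whose elements satisfy those relations), the elements ε_i defined by ε₁ = ε and
ε_{i+1} = σ_i ε_i σ_i⁻¹ satisfy the relations (2.6). -/
theorem inverse_braid_monoid_eps_relations {M : Type*} [Monoid M] (n : ℕ) (hn : 2 ≤ n)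
    (sig sigi : ℕ → M) (eps : M) (E : ℕ → M)
    -- braid relations (2.1)
    (hcomm : ∀ i j, 1 ≤ i → i + 1 < j → j ≤ n - 1 → sig i * sig j = sig j * sig i)
    (hbraid : ∀ i, 1 ≤ i → i + 1 ≤ n - 1 →
      sig i * sig (i + 1) * sig i = sig (i + 1) * sig i * sig (i + 1))
    -- inverse braid monoid relations (2.3)
    (hinv : ∀ i, 1 ≤ i → i ≤ n - 1 → sig i * sigi i = 1 ∧ sigi i * sig i = 1)
    (hepscomm : ∀ i, 2 ≤ i → i ≤ n - 1 → eps * sig i = sig i * eps)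
    (heps1 : sig 1 * eps * sig 1 * eps = eps * sig 1 * eps ∧
      eps * sig 1 * eps * sig 1 = eps * sig 1 * eps)
    (hidem : eps * eps = eps ∧ eps * (sig 1 * sig 1) = eps ∧ sig 1 * sig 1 * eps = eps)
    -- the elements ε_i : ε₁ = ε, ε_{i+1} = σ_i ε_i σ_i⁻¹
    (hE1 : E 1 = eps)
    (hEsucc : ∀ i, 1 ≤ i → i ≤ n - 1 → E (i + 1) = sig i * E i * sigi i) :
    (∀ i j, 1 ≤ i → i ≤ n - 1 → 1 ≤ j → j ≤ n → j ≠ i → j ≠ i + 1 →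
        E j * sig i = sig i * E j) ∧
    (∀ i, 1 ≤ i → i ≤ n - 1 → E i * sig i = sig i * E (i + 1)) ∧
    (∀ i, 1 ≤ i → i ≤ n - 1 → E (i + 1) * sig i = sig i * E i) ∧
    (∀ i, 1 ≤ i → i ≤ n → E i * E i = E i) ∧
    (∀ i, 1 ≤ i → i ≤ n - 1 →
        E (i + 1) * (sig i * sig i) = E (i + 1) ∧
        sig i * sig i * E (i + 1) = E (i + 1)) ∧
    (∀ i, 1 ≤ i → i ≤ n - 1 →
        E i * E (i + 1) * sig i = E i * E (i + 1) ∧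
        sig i * (E i * E (i + 1)) = E i * E (i + 1)) := by
  -- right cancellation by sig i
  have canr : ∀ i, 1 ≤ i → i ≤ n - 1 → ∀ x y : M, x * sig i = y * sig i → x = y := by
    intro i h1 h2 x y h
    have h3 := (hinv i h1 h2).1
    calc x = x * (sig i * sigi i) := by rw [h3, mul_one]
      _ = x * sig i * sigi i := by rw [mul_assoc]
      _ = y * sig i * sigi i := by rw [h]
      _ = y * (sig i * sigi i) := by rw [mul_assoc]
      _ = y := by rw [h3, mul_one]
  -- the inverse-free recurrence
  have C : ∀ i, 1 ≤ i → i ≤ n - 1 → E (i + 1) * sig i = sig i * E i := by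
    intro i h1 h2
    rw [hEsucc i h1 h2, mul_assoc, (hinv i h1 h2).2, mul_one]
  have Cz : ∀ i, 1 ≤ i → i ≤ n - 1 → ∀ z : M,
      E (i + 1) * (sig i * z) = sig i * (E i * z) := fun i h1 h2 => zf_aux (C i h1 h2)
  -- braid relation, right-assoc forms
  have br : ∀ i, 1 ≤ i → i + 1 ≤ n - 1 →
      sig i * (sig (i + 1) * sig i) = sig (i + 1) * (sig i * sig (i + 1)) := by
    intro i h1 h2
    simpa only [mul_assoc] using hbraid i h1 h2
  have bzz : ∀ i, 1 ≤ i → i + 1 ≤ n - 1 → ∀ z : M,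
      sig i * (sig (i + 1) * (sig i * z)) = sig (i + 1) * (sig i * (sig (i + 1) * z)) := by
    intro i h1 h2 z
    simpa only [mul_assoc] using zf_aux (hbraid i h1 h2) z
  -- (A): commutation of E j with sig i for j ∉ {i, i+1}
  have A : ∀ j i, 1 ≤ i → i ≤ n - 1 → 1 ≤ j → j ≤ n → j ≠ i → j ≠ i + 1 →
      E j * sig i = sig i * E j := by
    intro j
    induction j using Nat.strong_induction_on with
    | _ j IH =>
      intro i hi1 hi2 hj1 hj2 hji hji1
      rcases (by omega : j = 1 ∨ 2 ≤ j) with rfl | h2j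
      · rw [hE1]
        exact hepscomm i (by omega) hi2
      · obtain ⟨k, rfl⟩ : ∃ k, j = k + 1 + 1 := ⟨j - 2, by omega⟩
        have hk1 : k + 1 ≤ n - 1 := by omega
        by_cases hik : i = k
        · -- near case
          subst hik
          apply canr (i + 1) (by omega) hk1
          apply canr i hi1 hi2
          have hA : E i * sig (i + 1) = sig (i + 1) * E i :=
            IH i (by omega) (i + 1) (by omega) hk1 hi1 (by omega) (by omega) (by omega)
          simp only [mul_assoc]
          rw [br i hi1 hk1, Cz (i + 1) (by omega) hk1, Cz i hi1 hi2, hA,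
            ← bzz i hi1 hk1, ← C i hi1 hi2, Cz (i + 1) (by omega) hk1]
        · -- far case
          have hfar : sig i * sig (k + 1) = sig (k + 1) * sig i := by
            rcases (by omega : i + 1 < k + 1 ∨ k + 1 + 1 < i) with h | h
            · exact hcomm i (k + 1) hi1 h hk1
            · exact (hcomm (k + 1) i (by omega) h hi2).symm
          apply canr (k + 1) (by omega) hk1
          simp only [mul_assoc]
          rw [hfar, Cz (k + 1) (by omega) hk1,
            IH (k + 1) (by omega) i hi1 hi2 (by omega) (by omega) (by omega) (by omega),
            C (k + 1) (by omega) hk1, zf_aux hfar]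
  -- (G): sig i ^ 2 absorbs into E i on both sides
  have G : ∀ i, 1 ≤ i → i ≤ n - 1 →
      (sig i * (sig i * E i) = E i) ∧ (E i * (sig i * sig i) = E i) := by
    intro i hi
    induction i, hi using Nat.le_induction with
    | base =>
      intro _
      rw [hE1]
      exact ⟨by simpa only [mul_assoc] using hidem.2.2, hidem.2.1⟩
    | succ i hi IH =>
      intro h
      have h2 : i ≤ n - 1 := by omega
      obtain ⟨Gl, Gr⟩ := IH h2
      have hA : E i * sig (i + 1) = sig (i + 1) * E i :=
        A i (i + 1) (by omega) h hi (by omega) (by omega) (by omega)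
      have uE : E (i + 1) * (sig i * sig (i + 1)) = sig i * (sig (i + 1) * E i) := by
        rw [← mul_assoc, C i hi h2, mul_assoc, hA]
      have uEz : ∀ z : M, E (i + 1) * (sig i * (sig (i + 1) * z)) =
          sig i * (sig (i + 1) * (E i * z)) := by
        intro z
        simpa only [mul_assoc] using zf_aux uE z
      have key1 : sig (i + 1) * (sig (i + 1) * (sig i * sig (i + 1))) =
          sig i * (sig (i + 1) * (sig i * sig i)) := by
        rw [← br i hi h, ← bzz i hi h]
      have key1z : ∀ z : M,
          sig (i + 1) * (sig (i + 1) * (sig i * (sig (i + 1) * z))) =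
          sig i * (sig (i + 1) * (sig i * (sig i * z))) := by
        intro z
        simpa only [mul_assoc] using zf_aux key1 z
      constructor
      · apply canr i hi h2
        apply canr (i + 1) (by omega) h
        simp only [mul_assoc]
        rw [uE, key1z, Gl]
      · apply canr i hi h2
        apply canr (i + 1) (by omega) h
        simp only [mul_assoc]
        rw [key1, uEz, Gr, uE]
  -- (B)
  have B : ∀ i, 1 ≤ i → i ≤ n - 1 → E i * sig i = sig i * E (i + 1) := by
    intro i h1 h2
    apply canr i h1 h2
    simp only [mul_assoc]
    rw [(G i h1 h2).2, C i h1 h2, (G i h1 h2).1]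
  -- (D)
  have D : ∀ i, 1 ≤ i → i ≤ n → E i * E i = E i := by
    intro i hi
    induction i, hi using Nat.le_induction with
    | base =>
      intro _
      rw [hE1]
      exact hidem.1
    | succ i hi IH =>
      intro h
      have h2 : i ≤ n - 1 := by omega
      apply canr i hi h2
      simp only [mul_assoc]
      rw [C i hi h2, Cz i hi h2, IH (by omega)]
  -- (E)
  have Eg : ∀ i, 1 ≤ i → i ≤ n - 1 →
      E (i + 1) * (sig i * sig i) = E (i + 1) ∧ sig i * sig i * E (i + 1) = E (i + 1) := by
    intro i h1 h2
    constructor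
    · apply canr i h1 h2
      simp only [mul_assoc]
      rw [Cz i h1 h2, (G i h1 h2).2, C i h1 h2]
    · apply canr i h1 h2
      simp only [mul_assoc]
      rw [C i h1 h2, (G i h1 h2).1]
  -- (F)
  have F : ∀ i, 1 ≤ i → i ≤ n - 1 →
      E i * E (i + 1) * sig i = E i * E (i + 1) ∧
      sig i * (E i * E (i + 1)) = E i * E (i + 1) := by
    intro i hi
    induction i, hi using Nat.le_induction with
    | base =>
      intro h
      have key : E 1 * E 2 = eps * sig 1 * eps := by
        apply canr 1 le_rfl h
        calc E 1 * E 2 * sig 1 = E 1 * (E 2 * sig 1) := by rw [mul_assoc]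
          _ = E 1 * (sig 1 * E 1) := by rw [C 1 le_rfl h]
          _ = eps * (sig 1 * eps) := by rw [hE1]
          _ = eps * sig 1 * eps := by rw [mul_assoc]
          _ = eps * sig 1 * eps * sig 1 := by rw [heps1.2]
      constructor
      · rw [key]
        exact heps1.2
      · rw [key]
        calc sig 1 * (eps * sig 1 * eps) = sig 1 * eps * sig 1 * eps := by
              simp only [mul_assoc]
          _ = eps * sig 1 * eps := heps1.1
    | succ i hi IH =>
      intro h
      have h2 : i ≤ n - 1 := by omega
      obtain ⟨F1, F2⟩ := IH h2
      have hA : E i * sig (i + 1) = sig (i + 1) * E i :=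
        A i (i + 1) (by omega) h hi (by omega) (by omega) (by omega)
      have uE : E (i + 1) * (sig i * sig (i + 1)) = sig i * (sig (i + 1) * E i) := by
        rw [← mul_assoc, C i hi h2, mul_assoc, hA]
      have uEz : ∀ z : M, E (i + 1) * (sig i * (sig (i + 1) * z)) =
          sig i * (sig (i + 1) * (E i * z)) := by
        intro z
        simpa only [mul_assoc] using zf_aux uE z
      have uE2 : E (i + 1 + 1) * (sig i * sig (i + 1)) =
          sig i * (sig (i + 1) * E (i + 1)) := by
        apply canr i hi h2
        simp only [mul_assoc]
        rw [br i hi h, Cz (i + 1) (by omega) h, uE, ← bzz i hi h, ← C i hi h2]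
      have uE2z : ∀ z : M, E (i + 1 + 1) * (sig i * (sig (i + 1) * z)) =
          sig i * (sig (i + 1) * (E (i + 1) * z)) := by
        intro z
        simpa only [mul_assoc] using zf_aux uE2 z
      constructor
      · apply canr i hi h2
        apply canr (i + 1) (by omega) h
        simp only [mul_assoc]
        rw [← br i hi h, uE2z, uE2, uEz, uEz,
          show E i * (E (i + 1) * sig i) = E i * E (i + 1) from by
            rw [← mul_assoc]; exact F1]
      · apply canr i hi h2
        apply canr (i + 1) (by omega) h
        simp only [mul_assoc]
        rw [uE2, uEz, ← bzz i hi h, F2]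
  exact ⟨fun i j h1 h2 h3 h4 h5 h6 => A j i h1 h2 h3 h4 h5 h6, B, C, D, Eg, F⟩
end

section
/- In the inverse braid monoid IB_n (presented by σ_i, σ_i^{-1}, ε_i and relations (2.1),(2.6)), the idempotent generators satisfy ε_i Δ = Δ ε_{n+1−i} for all i = 1,…,n, where Δ = (σ_1⋯σ_{n-1})(σ_1⋯σ_{n-2})⋯σ_1 is the Garside element. -/
/-- The Garside fundamental element `Δ = Π_{n-1} Π_{n-2} ⋯ Π_1`, where
`Π_t = σ_1 σ_2 ⋯ σ_t`, in a monoid. -/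
def garsideM {M : Type*} [Monoid M] (s : ℕ → M) (n : ℕ) : M :=
  ((List.range (n - 1)).map fun k =>
    ((List.range (n - 1 - k)).map fun j => s (j + 1)).prod).prod

/-- `Π_t = σ_1 ⋯ σ_t`. -/
def PiM {M : Type*} [Monoid M] (s : ℕ → M) (t : ℕ) : M :=
  ((List.range t).map fun j => s (j + 1)).prod

lemma PiM_succ {M : Type*} [Monoid M] (s : ℕ → M) (t : ℕ) :
    PiM s (t + 1) = PiM s t * s (t + 1) := by
  simp [PiM, List.range_succ]

/-- the index permutation of `Π_t`. -/
def pf (t j : ℕ) : ℕ := if j = 1 then t + 1 else if j ≤ t + 1 then j - 1 else j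

lemma epsPi {M : Type*} [Monoid M] (n : ℕ) (hn : 2 ≤ n) (sig : ℕ → M) (eps : ℕ → M)
    (h₁ : ∀ i j, 1 ≤ i → i ≤ n - 1 → 1 ≤ j → j ≤ n → j ≠ i → j ≠ i + 1 →
      eps j * sig i = sig i * eps j)
    (h₂ : ∀ i, 1 ≤ i → i ≤ n - 1 → eps i * sig i = sig i * eps (i + 1))
    (h₃ : ∀ i, 1 ≤ i → i ≤ n - 1 → eps (i + 1) * sig i = sig i * eps i) :
    ∀ t, t ≤ n - 1 → ∀ j, 1 ≤ j → j ≤ n →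
      eps j * PiM sig t = PiM sig t * eps (pf t j) := by
  intro t
  induction t with
  | zero =>
    intro _ j hj1 hjn
    have hp : pf 0 j = j := by unfold pf; split_ifs <;> omega
    simp [PiM, hp]
  | succ t ih =>
    intro ht j hj1 hjn
    have ht' : t ≤ n - 1 := by omega
    rw [PiM_succ, ← mul_assoc, ih ht' j hj1 hjn, mul_assoc]
    rcases eq_or_ne j 1 with h1 | h1
    · have e1 : pf t j = t + 1 := by unfold pf; split_ifs <;> omega
      have e2 : pf (t + 1) j = t + 2 := by unfold pf; split_ifs <;> omega
      rw [e1, e2, h₂ (t + 1) (by omega) (by omega), ← mul_assoc]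
    · rcases le_or_gt j (t + 1) with h2 | h2
      · -- 2 ≤ j ≤ t+1 : pf t j = j - 1, stays j - 1
        have e1 : pf t j = j - 1 := by unfold pf; split_ifs <;> omega
        have e2 : pf (t + 1) j = j - 1 := by unfold pf; split_ifs <;> omega
        rw [e1, e2, h₁ (t + 1) (j - 1) (by omega) (by omega) (by omega) (by omega)
          (by omega) (by omega), ← mul_assoc]
      · rcases eq_or_ne j (t + 2) with h3 | h3
        · have e1 : pf t j = t + 2 := by unfold pf; split_ifs <;> omega
          have e2 : pf (t + 1) j = t + 1 := by unfold pf; split_ifs <;> omega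
          rw [e1, e2, h₃ (t + 1) (by omega) (by omega), ← mul_assoc]
        · have e1 : pf t j = j := by unfold pf; split_ifs <;> omega
          have e2 : pf (t + 1) j = j := by unfold pf; split_ifs <;> omega
          rw [e1, e2, h₁ (t + 1) j (by omega) (by omega) (by omega) (by omega)
            (by omega) (by omega), ← mul_assoc]

/-- in the inverse braid monoid IB_n, presented by generators σ_i, σ_i⁻¹,
ε_i and the relations (2.1), (2.6) (hence in any monoid whose elements satisfy those
relations), the idempotent generators satisfy ε_i Δ = Δ ε_{n+1-i} for i = 1, …, n,
where Δ is the Garside element. -/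
theorem eps_garside_commutation {M : Type*} [Monoid M] (n : ℕ) (hn : 2 ≤ n)
    (sig sigi : ℕ → M) (eps : ℕ → M)
    -- braid relations (2.1)
    (hcomm : ∀ i j, 1 ≤ i → i + 1 < j → j ≤ n - 1 → sig i * sig j = sig j * sig i)
    (hbraid : ∀ i, 1 ≤ i → i + 1 ≤ n - 1 →
      sig i * sig (i + 1) * sig i = sig (i + 1) * sig i * sig (i + 1))
    -- invertibility of the σ_i
    (hinv : ∀ i, 1 ≤ i → i ≤ n - 1 → sig i * sigi i = 1 ∧ sigi i * sig i = 1)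
    -- relations (2.6)
    (h₁ : ∀ i j, 1 ≤ i → i ≤ n - 1 → 1 ≤ j → j ≤ n → j ≠ i → j ≠ i + 1 →
      eps j * sig i = sig i * eps j)
    (h₂ : ∀ i, 1 ≤ i → i ≤ n - 1 → eps i * sig i = sig i * eps (i + 1))
    (h₃ : ∀ i, 1 ≤ i → i ≤ n - 1 → eps (i + 1) * sig i = sig i * eps i)
    (h₄ : ∀ i, 1 ≤ i → i ≤ n → eps i * eps i = eps i)
    (h₅ : ∀ i, 1 ≤ i → i ≤ n - 1 →
      eps (i + 1) * (sig i * sig i) = eps (i + 1) ∧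
      sig i * sig i * eps (i + 1) = eps (i + 1))
    (h₆ : ∀ i, 1 ≤ i → i ≤ n - 1 →
      eps i * eps (i + 1) * sig i = eps i * eps (i + 1) ∧
      sig i * (eps i * eps (i + 1)) = eps i * eps (i + 1)) :
    ∀ i, 1 ≤ i → i ≤ n → eps i * garsideM sig n = garsideM sig n * eps (n + 1 - i) := by
  -- partial products of Δ
  set D : ℕ → M := fun m => ((List.range m).map fun k => PiM sig (n - 1 - k)).prod with hD
  have hDsucc : ∀ m, D (m + 1) = D m * PiM sig (n - 1 - m) := by
    intro m; simp [hD, List.range_succ]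
  have key : ∀ m, m ≤ n - 1 → ∀ j, 1 ≤ j → j ≤ n →
      eps j * D m = D m * eps (if j ≤ m then n + 1 - j else j - m) := by
    intro m
    induction m with
    | zero =>
      intro _ j hj1 hjn
      have h0 : (if j ≤ 0 then n + 1 - j else j - 0) = j := by split_ifs <;> omega
      rw [h0]; simp [hD]
    | succ m ih =>
      intro hm j hj1 hjn
      have hm' : m ≤ n - 1 := by omega
      have hq1 : 1 ≤ (if j ≤ m then n + 1 - j else j - m) := by split_ifs <;> omega
      have hqn : (if j ≤ m then n + 1 - j else j - m) ≤ n := by split_ifs <;> omega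
      rw [hDsucc, ← mul_assoc, ih hm' j hj1 hjn, mul_assoc,
        epsPi n hn sig eps h₁ h₂ h₃ (n - 1 - m) (by omega) _ hq1 hqn, ← mul_assoc]
      congr 2
      rcases le_or_gt j m with hc | hc
      · have : (if j ≤ m then n + 1 - j else j - m) = n + 1 - j := by split_ifs <;> omega
        rw [this]
        unfold pf; split_ifs <;> omega
      · have : (if j ≤ m then n + 1 - j else j - m) = j - m := by split_ifs <;> omega
        rw [this]
        rcases eq_or_ne j (m + 1) with he | he
        · unfold pf; split_ifs <;> omega
        · unfold pf; split_ifs <;> omega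
  intro i hi1 hin
  have hgar : garsideM sig n = D (n - 1) := rfl
  have hkey := key (n - 1) le_rfl i hi1 hin
  have harg : (if i ≤ n - 1 then n + 1 - i else i - (n - 1)) = n + 1 - i := by
    split_ifs <;> omega
  rw [harg] at hkey
  rw [hgar, hkey]
end
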